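/- Let (G, H, Γ) be a cut-and-project scheme with W₀ ⊆ H a compact neighbourhood of the identity. If the model set P₀ = π_G((G × W₀) ∩ Γ) is relatively dense in G, then Γ is a uniform lattice in G × H, i.e., (G×H)/Γ is compact. -/

import Mathlib

open scoped Pointwise
open Topology MeasureTheory

/-- A lattice in a locally compact group: a discrete subgroup admitting a measurable
fundamental domain of finite Haar measure. -/
def IsLatticeSubgroup {G : Type*} [Group G] [TopologicalSpace G] [MeasurableSpace G]
    (Γ : Subgroup G) : Prop :=
  DiscreteTopology ↥Γ ∧
    ∃ μ : Measure G, μ.IsHaarMeasure ∧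
      ∃ D : Set G, MeasurableSet D ∧ μ D ≠ ⊤ ∧ ∀ x : G, ∃! γ : Γ, (γ : G) * x ∈ D

/-- A cut-and-project scheme `(G, H, Γ)`: `Γ` is a lattice in `G × H`, the projection to
`G` is injective on `Γ` and the projection of `Γ` to `H` is dense. -/
def IsCutAndProjectScheme {G H : Type*} [Group G] [Group H]
    [TopologicalSpace G] [TopologicalSpace H] [MeasurableSpace G] [MeasurableSpace H]
    (Γ : Subgroup (G × H)) : Prop :=
  IsLatticeSubgroup Γ ∧ Set.InjOn Prod.fst (Γ : Set (G × H)) ∧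
    Dense (Prod.snd '' (Γ : Set (G × H)))

/-- If `(G,H,Γ)` is a cut-and-project scheme, `W₀` a compact
neighbourhood of the identity in `H`, and the model set `P₀ = π_G((G × W₀) ∩ Γ)` is
relatively dense in `G`, then `Γ` is a uniform (cocompact) lattice in `G × H`. -/
theorem uniform_of_modelSet_relativelyDense
    {G H : Type*} [Group G] [Group H] [TopologicalSpace G] [TopologicalSpace H]
    [IsTopologicalGroup G] [IsTopologicalGroup H]
    [LocallyCompactSpace G] [LocallyCompactSpace H]
    [MeasurableSpace G] [MeasurableSpace H]
    (Γ : Subgroup (G × H)) (hΓ : IsCutAndProjectScheme Γ)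
    (W₀ : Set H) (hW₀c : IsCompact W₀) (hW₀n : W₀ ∈ 𝓝 (1 : H))
    (hdense : ∃ K : Set G, IsCompact K ∧
      (Prod.fst '' ((Set.univ ×ˢ W₀) ∩ (Γ : Set (G × H)))) * K = Set.univ) :
    ∃ K : Set (G × H), IsCompact K ∧ (Γ : Set (G × H)) * K = Set.univ := by
  obtain ⟨K₀, hK₀c, hK₀⟩ := hdense
  refine ⟨K₀ ×ˢ (W₀⁻¹ * W₀), (hK₀c.prod ((hW₀c.inv).mul hW₀c)), ?_⟩
  apply Set.eq_univ_of_forall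
  rintro ⟨g, h⟩
  -- find γ₁ ∈ Γ with γ₁.2 = h * v⁻¹, v ∈ W₀
  have h1 : (1 : H) ∈ interior W₀ := mem_interior_iff_mem_nhds.2 hW₀n
  have hopen : IsOpen ((fun v : H => h * v⁻¹) '' interior W₀) := by
    have heq : (fun v : H => h * v⁻¹) = (fun v => h * v) ∘ (fun v : H => v⁻¹) := rfl
    rw [heq, Set.image_comp]
    exact (Homeomorph.mulLeft h).isOpenMap _ ((Homeomorph.inv H).isOpenMap _ isOpen_interior)
  have hne : ((fun v : H => h * v⁻¹) '' interior W₀).Nonempty := ⟨h, 1, h1, by simp⟩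
  obtain ⟨s, hsΓ, hs⟩ := hΓ.2.2.exists_mem_open hopen hne
  obtain ⟨v, hv, hsv⟩ := hs
  obtain ⟨γ₁, hγ₁Γ, hγ₁2⟩ := hsΓ
  -- use relative density for γ₁.1⁻¹ * g
  have hg : γ₁.1⁻¹ * g ∈ (Prod.fst '' ((Set.univ ×ˢ W₀) ∩ (Γ : Set (G × H)))) * K₀ := by
    rw [hK₀]; trivial
  obtain ⟨p, hp, k, hk, hpk⟩ := hg
  obtain ⟨γ₂, hγ₂, hγ₂1⟩ := hp
  have hγ₂Γ : γ₂ ∈ Γ := hγ₂.2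
  have hγ₂2 : γ₂.2 ∈ W₀ := hγ₂.1.2
  refine ⟨γ₁ * γ₂, mul_mem hγ₁Γ hγ₂Γ, (k, γ₂.2⁻¹ * v),
    ⟨hk, Set.mul_mem_mul (Set.inv_mem_inv.2 hγ₂2) (interior_subset hv)⟩, ?_⟩
  have hγv : γ₁.2 = h * v⁻¹ := by rw [hγ₁2, ← hsv]
  have hpk' : p * k = γ₁.1⁻¹ * g := hpk
  ext
  · show γ₁.1 * γ₂.1 * k = g
    rw [hγ₂1, mul_assoc, hpk', mul_inv_cancel_left]
  · show γ₁.2 * γ₂.2 * (γ₂.2⁻¹ * v) = h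
    rw [hγv]; group
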